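/- (Kahane contraction principle) Let X be a Banach space, N ∈ ℕ, x_1, …, x_N ∈ X and λ_1, …, λ_N scalars with |λ_j| ≤ 1 for all j. If ε_1, …, ε_N are independent Rademacher random variables (each taking values ±1 with probability 1/2), then E‖∑_{j=1}^N ε_j λ_j x_j‖ ≤ 2 E‖∑_{j=1}^N ε_j x_j‖. -/

import Mathlib

noncomputable section

/-- Sum over all sign patterns of `‖∑_j ±y_j‖`. -/
def sgnSum {X : Type*} [NormedAddCommGroup X] (N : ℕ) (y : Fin N → X) : ℝ :=
  ∑ σ : Fin N → Bool, ‖∑ j, (if σ j then y j else -y j)‖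

lemma norm_smul_add_le_aux {X : Type*} [NormedAddCommGroup X] [NormedSpace ℝ X]
    (t : ℝ) (ht : |t| ≤ 1) (u w : X) :
    ‖t • u + w‖ ≤ ((1+t)/2) * ‖u + w‖ + ((1-t)/2) * ‖-u + w‖ := by
  obtain ⟨h1, h2⟩ := abs_le.mp ht
  have hp : (0:ℝ) ≤ (1+t)/2 := by linarith
  have hq : (0:ℝ) ≤ (1-t)/2 := by linarith
  have hrw : t • u + w = ((1+t)/2) • (u + w) + ((1-t)/2) • (-u + w) := by module
  rw [hrw]
  refine (norm_add_le _ _).trans ?_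
  rw [norm_smul, norm_smul, Real.norm_of_nonneg hp, Real.norm_of_nonneg hq]

lemma sgnSum_update_le {X : Type*} [NormedAddCommGroup X] [NormedSpace ℝ X]
    (N : ℕ) (y : Fin N → X) (k : Fin N) (t : ℝ) (ht : |t| ≤ 1) :
    sgnSum N (Function.update y k (t • y k)) ≤ sgnSum N y := by
  classical
  set u : (Fin N → Bool) → X := fun σ => if σ k then y k else -y k with hu
  set w : (Fin N → Bool) → X := fun σ =>
    ∑ j ∈ Finset.univ.erase k, (if σ j then y j else -y j) with hw
  have hinv : Function.Involutive (fun σ : Fin N → Bool => Function.update σ k (!σ k)) := by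
    intro σ; funext j
    by_cases hj : j = k <;> simp [hj, Function.update]
  set e : Equiv.Perm (Fin N → Bool) := hinv.toPerm _ with he
  have hB : ∀ σ : Fin N → Bool, ∑ j, (if σ j then y j else -y j) = u σ + w σ := by
    intro σ
    rw [hu, hw]
    exact (Finset.add_sum_erase Finset.univ _ (Finset.mem_univ k)).symm
  have hA : ∀ σ : Fin N → Bool,
      ∑ j, (if σ j then Function.update y k (t • y k) j else -Function.update y k (t • y k) j)
        = t • u σ + w σ := by
    intro σ
    rw [← Finset.add_sum_erase Finset.univ _ (Finset.mem_univ k)]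
    congr 1
    · simp only [Function.update_self, hu]
      by_cases h : σ k <;> simp [h, smul_neg]
    · rw [hw]
      refine Finset.sum_congr rfl fun j hj => ?_
      have : j ≠ k := Finset.ne_of_mem_erase hj
      simp [Function.update_of_ne this]
  have hC : ∀ σ : Fin N → Bool,
      ∑ j, (if (e σ) j then y j else -y j) = -u σ + w σ := by
    intro σ
    rw [← Finset.add_sum_erase Finset.univ _ (Finset.mem_univ k)]
    congr 1
    · have : (e σ) k = !σ k := by simp [he, Function.Involutive.toPerm]
      rw [this, hu]
      by_cases h : σ k <;> simp [h]
    · rw [hw]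
      refine Finset.sum_congr rfl fun j hj => ?_
      have hjk : j ≠ k := Finset.ne_of_mem_erase hj
      have : (e σ) j = σ j := by simp [he, Function.Involutive.toPerm, Function.update_of_ne hjk]
      rw [this]
  calc sgnSum N (Function.update y k (t • y k))
      = ∑ σ : Fin N → Bool, ‖t • u σ + w σ‖ := by
        unfold sgnSum; exact Finset.sum_congr rfl fun σ _ => by rw [hA σ]
    _ ≤ ∑ σ : Fin N → Bool, (((1+t)/2) * ‖u σ + w σ‖ + ((1-t)/2) * ‖-u σ + w σ‖) :=
        Finset.sum_le_sum fun σ _ => norm_smul_add_le_aux t ht (u σ) (w σ)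
    _ = ((1+t)/2) * ∑ σ : Fin N → Bool, ‖u σ + w σ‖
        + ((1-t)/2) * ∑ σ : Fin N → Bool, ‖-u σ + w σ‖ := by
        rw [Finset.sum_add_distrib, Finset.mul_sum, Finset.mul_sum]
    _ = ((1+t)/2) * sgnSum N y + ((1-t)/2) * sgnSum N y := by
        congr 1
        · congr 1
          unfold sgnSum
          exact (Finset.sum_congr rfl fun σ _ => by rw [hB σ])
        · congr 1
          have : ∑ σ : Fin N → Bool, ‖-u σ + w σ‖
              = ∑ σ : Fin N → Bool, ‖∑ j, (if (e σ) j then y j else -y j)‖ :=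
            Finset.sum_congr rfl fun σ _ => by rw [hC σ]
          rw [this]
          unfold sgnSum
          exact Fintype.sum_equiv e _ _ (fun σ => rfl)
    _ = sgnSum N y := by ring

lemma sgnSum_smul_le {X : Type*} [NormedAddCommGroup X] [NormedSpace ℝ X]
    (N : ℕ) (y : Fin N → X) (a : Fin N → ℝ) (ha : ∀ j, |a j| ≤ 1) :
    sgnSum N (fun j => a j • y j) ≤ sgnSum N y := by
  classical
  have key : ∀ s : Finset (Fin N),
      sgnSum N (fun j => if j ∈ s then a j • y j else y j) ≤ sgnSum N y := by
    intro s
    induction s using Finset.induction_on with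
    | empty => simp
    | @insert k s hk ih =>
      set z : Fin N → X := fun j => if j ∈ s then a j • y j else y j with hz
      have hzk : z k = y k := by simp [hz, hk]
      have heq : (fun j => if j ∈ insert k s then a j • y j else y j)
          = Function.update z k (a k • z k) := by
        funext j
        by_cases hj : j = k
        · subst hj; simp [hzk]
        · simp [Function.update_of_ne hj, hz, hj]
      rw [heq]
      exact (sgnSum_update_le N z k (a k) (ha k)).trans ih
  have := key Finset.univ
  simpa using this

/-- Expectation `E‖∑_{j} ε_j x_j‖` over independent random signs `ε : Fin N → {±1}`. -/
def radAvg {X : Type*} [NormedAddCommGroup X] [NormedSpace ℂ X]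
    (N : ℕ) (x : Fin N → X) : ℝ :=
  ((2 : ℝ) ^ N)⁻¹ *
    ∑ σ : Fin N → Bool, ‖∑ j, (if σ j then (1 : ℂ) else -1) • x j‖

lemma radAvg_eq_sgnSum {X : Type*} [NormedAddCommGroup X] [NormedSpace ℂ X]
    (N : ℕ) (x : Fin N → X) :
    radAvg N x = ((2:ℝ)^N)⁻¹ * sgnSum N x := by
  unfold radAvg sgnSum
  congr 1
  refine Finset.sum_congr rfl fun σ _ => ?_
  congr 1
  refine Finset.sum_congr rfl fun j _ => ?_
  by_cases h : σ j <;> simp [h]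

/-- Kahane's contraction principle: for scalars `λ_j` with `|λ_j| ≤ 1`,
`E‖∑ ε_j λ_j x_j‖ ≤ 2 E‖∑ ε_j x_j‖`. -/
theorem kahane_contraction_principle {X : Type*}
    [NormedAddCommGroup X] [NormedSpace ℂ X]
    (N : ℕ) (x : Fin N → X) (lam : Fin N → ℂ) (hlam : ∀ j, ‖lam j‖ ≤ 1) :
    radAvg N (fun j => lam j • x j) ≤ 2 * radAvg N x := by
  classical
  have hre : ∀ j, |(lam j).re| ≤ 1 := fun j =>
    (Complex.abs_re_le_norm _).trans (by simpa using hlam j)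
  have him : ∀ j, |(lam j).im| ≤ 1 := fun j =>
    (Complex.abs_im_le_norm _).trans (by simpa using hlam j)
  have key : ∀ σ : Fin N → Bool,
      ‖∑ j, (if σ j then lam j • x j else -(lam j • x j))‖
        ≤ ‖∑ j, (if σ j then (lam j).re • x j else -((lam j).re • x j))‖
          + ‖∑ j, (if σ j then (lam j).im • x j else -((lam j).im • x j))‖ := by
    intro σ
    have hsplit : ∑ j, (if σ j then lam j • x j else -(lam j • x j))
        = (∑ j, (if σ j then (lam j).re • x j else -((lam j).re • x j)))
          + Complex.I • ∑ j, (if σ j then (lam j).im • x j else -((lam j).im • x j)) := by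
      rw [Finset.smul_sum, ← Finset.sum_add_distrib]
      refine Finset.sum_congr rfl fun j _ => ?_
      have hl : lam j • x j = (lam j).re • x j + (lam j).im • (Complex.I • x j) := by
        conv_lhs => rw [← Complex.re_add_im (lam j)]
        rw [add_smul, mul_smul, Complex.coe_smul, Complex.coe_smul]
      by_cases h : σ j <;>
        simp [h, hl, smul_comm ((lam j).im) Complex.I, smul_neg, neg_add, add_comm]
    rw [hsplit]
    refine (norm_add_le _ _).trans ?_
    rw [norm_smul, Complex.norm_I, one_mul]
  have h2 : (0:ℝ) ≤ ((2:ℝ)^N)⁻¹ := by positivity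
  have hstep1 : sgnSum N (fun j => lam j • x j)
      ≤ sgnSum N (fun j => (lam j).re • x j) + sgnSum N (fun j => (lam j).im • x j) := by
    unfold sgnSum
    rw [← Finset.sum_add_distrib]
    exact Finset.sum_le_sum fun σ _ => key σ
  have hstep2 := sgnSum_smul_le N x (fun j => (lam j).re) hre
  have hstep3 := sgnSum_smul_le N x (fun j => (lam j).im) him
  rw [radAvg_eq_sgnSum, radAvg_eq_sgnSum]
  calc ((2:ℝ)^N)⁻¹ * sgnSum N (fun j => lam j • x j)
      ≤ ((2:ℝ)^N)⁻¹ * (sgnSum N x + sgnSum N x) := by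
        apply mul_le_mul_of_nonneg_left _ h2
        exact hstep1.trans (add_le_add hstep2 hstep3)
    _ = 2 * (((2:ℝ)^N)⁻¹ * sgnSum N x) := by ring
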